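/- In ℚ⟨⟨X,Y⟩⟩, the degree-4 homogeneous component of log(exp(X)·exp(Y)) equals (1/24)XXYY - (1/12)XYXY + (1/12)YXYX - (1/24)YYXX, which equals -(1/24)[X,[Y,[X,Y]]]. -/

import Mathlib

/-- The degree-`m` homogeneous component of `exp X * exp Y`:
`E X Y m = ∑_{p+q=m} X^p Y^q / (p! q!)`. -/
noncomputable def bchE {A : Type*} [Ring A] [Algebra ℚ A] (X Y : A) (m : ℕ) : A :=
  ∑ p ∈ Finset.range (m + 1),
    (((p.factorial : ℚ) * ((m - p).factorial : ℚ))⁻¹) • (X ^ p * Y ^ (m - p))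

/-- The degree-`m` homogeneous component `Φ_m(X,Y)` of `log (exp X * exp Y)`, obtained from
`log(1+Z) = ∑_k (-1)^{k-1} Z^k / k` with `Z = exp X exp Y - 1` by collecting, for each `k`,
the compositions `m = m₁ + ⋯ + m_k` into positive parts, each part contributing the degree-`mᵢ`
component of `exp X exp Y`. -/
noncomputable def bchPhi {A : Type*} [Ring A] [Algebra ℚ A] (X Y : A) (m : ℕ) : A :=
  ∑ c : Composition m,
    ((-1 : ℚ) ^ (c.length - 1) / (c.length : ℚ)) • (c.blocks.map (bchE X Y)).prod

lemma bchE_one {A : Type*} [Ring A] [Algebra ℚ A] (X Y : A) : bchE X Y 1 = X + Y := by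
  simp [bchE, Finset.sum_range_succ, Nat.factorial]; abel

lemma bchE_two {A : Type*} [Ring A] [Algebra ℚ A] (X Y : A) :
    bchE X Y 2 = (2⁻¹ : ℚ) • (X*X) + X*Y + (2⁻¹ : ℚ) • (Y*Y) := by
  simp [bchE, Finset.sum_range_succ, Nat.factorial, pow_succ]
  norm_num; abel

lemma bchE_three {A : Type*} [Ring A] [Algebra ℚ A] (X Y : A) :
    bchE X Y 3 = (6⁻¹ : ℚ) • (X*(X*X)) + (2⁻¹ : ℚ) • (X*(X*Y)) + (2⁻¹ : ℚ) • (X*(Y*Y))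
      + (6⁻¹ : ℚ) • (Y*(Y*Y)) := by
  simp [bchE, Finset.sum_range_succ, Nat.factorial, pow_succ]
  norm_num [mul_assoc]; abel

lemma bchE_four {A : Type*} [Ring A] [Algebra ℚ A] (X Y : A) :
    bchE X Y 4 = (24⁻¹ : ℚ) • (X*(X*(X*X))) + (6⁻¹ : ℚ) • (X*(X*(X*Y))) + (4⁻¹ : ℚ) • (X*(X*(Y*Y)))
      + (6⁻¹ : ℚ) • (X*(Y*(Y*Y))) + (24⁻¹ : ℚ) • (Y*(Y*(Y*Y))) := by
  simp [bchE, Finset.sum_range_succ, Nat.factorial, pow_succ]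
  norm_num [mul_assoc]; abel

instance (n : ℕ) : DecidableEq (Composition n) := fun a b =>
  decidable_of_iff (a.blocks = b.blocks)
    ⟨fun h => Composition.ext h, fun h => by rw [h]⟩

def bchC4 : Composition 4 := ⟨[4], by decide, by decide⟩
def bchC13 : Composition 4 := ⟨[1,3], by decide, by decide⟩
def bchC31 : Composition 4 := ⟨[3,1], by decide, by decide⟩
def bchC22 : Composition 4 := ⟨[2,2], by decide, by decide⟩
def bchC112 : Composition 4 := ⟨[1,1,2], by decide, by decide⟩
def bchC121 : Composition 4 := ⟨[1,2,1], by decide, by decide⟩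
def bchC211 : Composition 4 := ⟨[2,1,1], by decide, by decide⟩
def bchC1111 : Composition 4 := ⟨[1,1,1,1], by decide, by decide⟩

def bchS : Finset (Composition 4) :=
  {bchC4, bchC13, bchC31, bchC22, bchC112, bchC121, bchC211, bchC1111}

lemma bch_univ : (Finset.univ : Finset (Composition 4)) = bchS := by
  refine (Finset.eq_of_subset_of_card_le (Finset.subset_univ bchS) ?_).symm
  rw [Finset.card_univ, composition_card]
  have : bchS.card = 8 := by decide
  omega

lemma bchPhi_four_gen {A : Type*} [Ring A] [Algebra ℚ A] (X Y : A) :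
    bchPhi X Y 4 =
      (1 / 24 : ℚ) • (X * X * Y * Y) - (1 / 12 : ℚ) • (X * Y * X * Y)
        + (1 / 12 : ℚ) • (Y * X * Y * X) - (1 / 24 : ℚ) • (Y * Y * X * X) := by
  rw [bchPhi, bch_univ, bchS]
  rw [Finset.sum_insert (by decide), Finset.sum_insert (by decide),
    Finset.sum_insert (by decide), Finset.sum_insert (by decide),
    Finset.sum_insert (by decide), Finset.sum_insert (by decide),
    Finset.sum_insert (by decide), Finset.sum_singleton]
  simp only [bchC4, bchC13, bchC31, bchC22, bchC112, bchC121, bchC211, bchC1111,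
    Composition.length, List.length, List.map, List.prod_cons, List.prod_nil, mul_one,
    bchE_one, bchE_two, bchE_three, bchE_four]
  norm_num
  simp only [mul_add, add_mul, sub_mul, mul_sub, smul_mul_assoc, mul_smul_comm, smul_smul,
    smul_add, smul_sub, mul_assoc]
  match_scalars <;> norm_num

/-- In `ℚ⟨⟨X,Y⟩⟩`, the degree-4 homogeneous component of `log (exp X * exp Y)` equals
`(1/24)XXYY - (1/12)XYXY + (1/12)YXYX - (1/24)YYXX`, which equals `-(1/24)[X,[Y,[X,Y]]]`. -/
theorem bchPhi_four (X Y : FreeAlgebra ℚ (Fin 2))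
    (hX : X = FreeAlgebra.ι ℚ 0) (hY : Y = FreeAlgebra.ι ℚ 1) :
    bchPhi X Y 4 =
      (1 / 24 : ℚ) • (X * X * Y * Y) - (1 / 12 : ℚ) • (X * Y * X * Y)
        + (1 / 12 : ℚ) • (Y * X * Y * X) - (1 / 24 : ℚ) • (Y * Y * X * X) ∧
    bchPhi X Y 4 = -((1 / 24 : ℚ) • ⁅X, ⁅Y, ⁅X, Y⁆⁆⁆) := by
  refine ⟨bchPhi_four_gen X Y, ?_⟩
  rw [bchPhi_four_gen X Y]
  simp only [Ring.lie_def, mul_sub, sub_mul, smul_sub, smul_add, smul_neg, mul_assoc]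
  match_scalars <;> norm_num
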